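/- Let α : I → G¹₄ be an admissible curve with position vector α = μ₁T + μ₂N + μ₃B₁ + μ₄B₂ in its Frenet frame, where the coefficients satisfy μ₁' = 1, ε₁κμ₁ + μ₂' - ε₂τμ₃ = 0, ε₂τμ₂ + μ₃' - ε₂σμ₄ = 0, ε₃σμ₃ + μ₄' = 0. If α is a rectifying curve (i.e. μ₂ ≡ 0), then the squared pseudo-Galilean distance d²(s) = μ₁² + ε₁μ₂² + ε₂μ₃² + ε₃μ₄² satisfies d²(s) = s² + cs + d for some real constants c, d. -/

import Mathlib

/-- For a rectifying admissible curve (`μ₂ ≡ 0`) in `G¹₄`, the squared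
pseudo-Galilean distance `d² = μ₁² + ε₁μ₂² + ε₂μ₃² + ε₃μ₄²` equals `s² + cs + d`. -/
theorem rectifying_distance_squared
    (μ₁ μ₂ μ₃ μ₄ κ τ σ : ℝ → ℝ) (ε₁ ε₂ ε₃ : ℝ)
    (hε₁ : ε₁ = 1 ∨ ε₁ = -1) (hε₂ : ε₂ = 1 ∨ ε₂ = -1) (hε₃ : ε₃ = 1 ∨ ε₃ = -1)
    (hμ₂ : Differentiable ℝ μ₂) (hμ₃ : Differentiable ℝ μ₃) (hμ₄ : Differentiable ℝ μ₄)
    (h1 : ∀ s, HasDerivAt μ₁ 1 s)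
    (h2 : ∀ s, ε₁ * κ s * μ₁ s + deriv μ₂ s - ε₂ * τ s * μ₃ s = 0)
    (h3 : ∀ s, ε₂ * τ s * μ₂ s + deriv μ₃ s - ε₂ * σ s * μ₄ s = 0)
    (h4 : ∀ s, ε₃ * σ s * μ₃ s + deriv μ₄ s = 0)
    (hrect : ∀ s, μ₂ s = 0) :
    ∃ c d : ℝ, ∀ s,
      (μ₁ s) ^ 2 + ε₁ * (μ₂ s) ^ 2 + ε₂ * (μ₃ s) ^ 2 + ε₃ * (μ₄ s) ^ 2
        = s ^ 2 + c * s + d := by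
  have hε₂sq : ε₂ ^ 2 = 1 := by rcases hε₂ with h | h <;> rw [h] <;> ring
  have hε₃sq : ε₃ ^ 2 = 1 := by rcases hε₃ with h | h <;> rw [h] <;> ring
  -- μ₃' = ε₂ σ μ₄ , μ₄' = - ε₃ σ μ₃
  have hd3 : ∀ s, deriv μ₃ s = ε₂ * σ s * μ₄ s := by
    intro s; have := h3 s; rw [hrect s] at this; linarith
  have hd4 : ∀ s, deriv μ₄ s = -(ε₃ * σ s * μ₃ s) := by
    intro s; have := h4 s; linarith
  -- f = ε₂ μ₃² + ε₃ μ₄² is constant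
  set f : ℝ → ℝ := fun s => ε₂ * (μ₃ s) ^ 2 + ε₃ * (μ₄ s) ^ 2 with hf
  have hfd : ∀ s, HasDerivAt f 0 s := by
    intro s
    have H3 := (hμ₃ s).hasDerivAt
    have H4 := (hμ₄ s).hasDerivAt
    have := ((H3.pow 2).const_mul ε₂).add ((H4.pow 2).const_mul ε₃)
    refine this.congr_deriv ?_
    symm
    rw [hd3 s, hd4 s]
    norm_num
    linear_combination (2 * σ s * μ₃ s * μ₄ s) * hε₃sq - (2 * σ s * μ₃ s * μ₄ s) * hε₂sq
  have hfconst : ∀ s, f s = f 0 := by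
    intro s
    have : ∀ x, deriv f x = 0 := fun x => (hfd x).deriv
    have hdiff : Differentiable ℝ f := fun x => (hfd x).differentiableAt
    have := is_const_of_deriv_eq_zero hdiff this s 0
    exact this
  -- μ₁ s = s + μ₁ 0
  have hμ₁ : ∀ s, μ₁ s = s + μ₁ 0 := by
    intro s
    set g : ℝ → ℝ := fun s => μ₁ s - s with hg
    have hgd : ∀ x, HasDerivAt g 0 x := by
      intro x
      have := (h1 x).sub (hasDerivAt_id x)
      exact this.congr_deriv (by norm_num)
    have hdiff : Differentiable ℝ g := fun x => (hgd x).differentiableAt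
    have := is_const_of_deriv_eq_zero hdiff (fun x => (hgd x).deriv) s 0
    simp only [hg] at this
    linarith
  refine ⟨2 * μ₁ 0, (μ₁ 0) ^ 2 + f 0, fun s => ?_⟩
  have := hfconst s
  rw [hrect s, hμ₁ s]
  simp only [hf] at this ⊢
  nlinarith [this]
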